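/- Leibniz rule via plane rooted trees: for any (n+1)-tuple f_0,...,f_n of n-times differentiable functions of one variable, the n-th derivative of the product f_0 f_1 ··· f_n at x equals the sum over plane rooted trees T on n+1 vertices and over permutations σ of the n+1 vertices of [ f_{σ(root)}^{(deg(root))}(x) / deg(root)! ] times the product over non-root vertices v of [ f_{σ(v)}^{(deg(v)-1)}(x) / (deg(v)-1)! ]. -/

import Mathlib

/-- A plane rooted tree: a root together with a linearly ordered list of
plane rooted subtrees. -/
inductive PlaneTree : Type
  | node : List PlaneTree → PlaneTree

namespace PlaneTree

mutual
  /-- The list, in depth-first (preorder) traversal order, of the numbers of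
  children of the vertices of a plane rooted tree.  Note that for the root
  `deg(root)` equals its number of children, while for every other vertex
  `deg(v) - 1` equals its number of children. -/
  def childCounts : PlaneTree → List ℕ
    | node ts => ts.length :: childCountsList ts
  /-- Auxiliary: concatenated child-count lists of a forest. -/
  def childCountsList : List PlaneTree → List ℕ
    | [] => []
    | t :: ts => childCounts t ++ childCountsList ts
end

/-- The number of vertices of a plane rooted tree. -/
def size (T : PlaneTree) : ℕ := T.childCounts.length

end PlaneTree

namespace PlaneTree

/-- Łukasiewicz words. -/
def IsLuka (l : List ℕ) : Prop :=
  l.sum + 1 = l.length ∧ ∀ k < l.length, k ≤ (l.take k).sum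

instance : DecidablePred IsLuka := fun l => by
  unfold IsLuka; infer_instance

mutual
theorem sum_cc : ∀ (T : PlaneTree), (childCounts T).sum + 1 = (childCounts T).length
  | node ts => by
    rw [childCounts]
    have := sum_ccl ts
    simp only [List.sum_cons, List.length_cons]
    omega
theorem sum_ccl : ∀ (ts : List PlaneTree),
    (childCountsList ts).sum + ts.length = (childCountsList ts).length
  | [] => by rw [childCountsList]; rfl
  | t :: ts => by
    rw [childCountsList]
    have h1 := sum_cc t
    have h2 := sum_ccl ts
    simp only [List.sum_append, List.length_append, List.length_cons]
    omega
end

theorem length_cc_pos (T : PlaneTree) : 1 ≤ (childCounts T).length := by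
  have := sum_cc T; omega

mutual
theorem pref_cc : ∀ (T : PlaneTree) (k : ℕ), k < (childCounts T).length →
    k ≤ ((childCounts T).take k).sum
  | node ts, 0, _ => by simp
  | node ts, (j+1), hk => by
    rw [childCounts] at hk ⊢
    simp only [List.length_cons] at hk
    rw [List.take_succ_cons]
    simp only [List.sum_cons]
    have := pref_ccl ts j (by omega)
    omega
theorem pref_ccl : ∀ (ts : List PlaneTree) (k : ℕ), k < (childCountsList ts).length →
    k < ((childCountsList ts).take k).sum + ts.length
  | [], k, hk => by rw [childCountsList] at hk; simp at hk
  | t :: ts, k, hk => by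
    rw [childCountsList] at hk ⊢
    rw [List.take_append, List.sum_append]
    simp only [List.length_append] at hk
    simp only [List.length_cons]
    rcases Nat.lt_or_ge k (childCounts t).length with h | h
    · have h1 := pref_cc t k h
      have h2 : k - (childCounts t).length = 0 := by omega
      rw [h2]
      simp only [List.take_zero, List.sum_nil]
      omega
    · rw [List.take_of_length_le h]
      have h1 := sum_cc t
      have h2 := pref_ccl ts (k - (childCounts t).length) (by omega)
      omega
end

theorem isLuka_cc (T : PlaneTree) : IsLuka (childCounts T) :=
  ⟨sum_cc T, fun k hk => pref_cc T k hk⟩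

/-- A Łukasiewicz word is determined among prefixes. -/
theorem luka_append_inj {l₁ l₂ r₁ r₂ : List ℕ} (h₁ : IsLuka l₁) (h₂ : IsLuka l₂)
    (h : l₁ ++ r₁ = l₂ ++ r₂) : l₁ = l₂ := by
  have key : ∀ (a b c d : List ℕ), IsLuka a → IsLuka b → a ++ c = b ++ d →
      a.length ≤ b.length → a = b := by
    intro a b c d ha hb hab hle
    have h1 : (a ++ c).take a.length = a := List.take_left ..
    have h2 : (b ++ d).take a.length = b.take a.length := by
      rw [List.take_append]
      have : a.length - b.length = 0 := by omega
      rw [this]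
      simp
    have h3 : a = b.take a.length := by rw [← h2, ← hab, h1]
    rcases Nat.lt_or_ge a.length b.length with hlt | hge
    · exfalso
      have h4 := hb.2 a.length hlt
      rw [← h3] at h4
      have h5 := ha.1
      omega
    · have hl2 : a.length = b.length := le_antisymm hle hge
      rw [hl2, List.take_length] at h3
      exact h3
  rcases Nat.le_total l₁.length l₂.length with hle | hle
  · exact key _ _ _ _ h₁ h₂ h hle
  · exact (key _ _ _ _ h₂ h₁ h.symm hle).symm

mutual
theorem cc_inj : ∀ (T T' : PlaneTree), childCounts T = childCounts T' → T = T'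
  | node ts, node ts', h => by
    rw [childCounts, childCounts] at h
    have h1 : ts.length = ts'.length := (List.cons.injEq _ _ _ _ ▸ h).1
    have h2 : childCountsList ts = childCountsList ts' := by
      have := List.cons.injEq (ts.length) (childCountsList ts) (ts'.length) (childCountsList ts') ▸ h
      exact this.2
    rw [ccl_inj ts ts' h1 h2]
theorem ccl_inj : ∀ (ts ts' : List PlaneTree), ts.length = ts'.length →
    childCountsList ts = childCountsList ts' → ts = ts'
  | [], [], _, _ => rfl
  | [], t' :: ts', h, _ => by simp at h
  | t :: ts, [], h, _ => by simp at h
  | t :: ts, t' :: ts', hlen, h => by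
    rw [childCountsList, childCountsList] at h
    have hcc : childCounts t = childCounts t' :=
      luka_append_inj (isLuka_cc t) (isLuka_cc t') h
    have h2 : childCountsList ts = childCountsList ts' :=
      (List.append_inj h (by rw [hcc])).2
    have h3 : ts.length = ts'.length := by simpa using hlen
    rw [cc_inj t t' hcc, ccl_inj ts ts' h3 h2]
end

/-- Discrete intermediate value: a ℤ-valued sequence that decreases by at most 1
per step hits every value between. -/
theorem discrete_ivt (g : ℕ → ℤ) (hstep : ∀ i, g i - 1 ≤ g (i+1)) (N : ℕ) (c : ℤ)
    (h0 : c ≤ g 0) (hN : g N ≤ c) : ∃ j ≤ N, g j = c := by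
  have hex : ∃ j, g j ≤ c := ⟨N, hN⟩
  classical
  refine ⟨Nat.find hex, Nat.find_min' hex hN, ?_⟩
  have hj₀ : g (Nat.find hex) ≤ c := Nat.find_spec hex
  rcases Nat.eq_zero_or_pos (Nat.find hex) with h | h
  · rw [h] at hj₀ ⊢
    omega
  · have hprev : ¬ g (Nat.find hex - 1) ≤ c := Nat.find_min hex (by omega)
    have hstep' := hstep (Nat.find hex - 1)
    have hs : Nat.find hex - 1 + 1 = Nat.find hex := by omega
    rw [hs] at hstep'
    omega

/-- `ForestCond m l` : `l` is the concatenated child-count word of a forest of `m` trees. -/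
def ForestCond (m : ℕ) (l : List ℕ) : Prop :=
  l.sum + m = l.length ∧ ∀ k < l.length, k < (l.take k).sum + m

theorem forestCond_ccl (ts : List PlaneTree) : ForestCond ts.length (childCountsList ts) :=
  ⟨sum_ccl ts, fun k hk => pref_ccl ts k hk⟩

theorem sum_take_mono (l : List ℕ) (j : ℕ) : (l.take j).sum ≤ (l.take (j+1)).sum := by
  have h1 : (l.take (j+1)).take j = l.take j := by
    rw [List.take_take]
    congr 1
    omega
  calc (l.take j).sum = ((l.take (j+1)).take j).sum := by rw [h1]
    _ ≤ (l.take (j+1)).sum := by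
        conv_rhs => rw [← List.take_append_drop j (l.take (j+1))]
        rw [List.sum_append]
        omega

def hgt (l : List ℕ) (j : ℕ) : ℤ := ((l.take j).sum : ℤ) + 1 - j

theorem hgt_hits (l : List ℕ) (k : ℕ) (hk : hgt l k ≤ 0) :
    ∃ j ≤ k, (l.take j).sum + 1 = j := by
  obtain ⟨j, hjk, hj⟩ := discrete_ivt (hgt l)
    (fun i => by
      unfold hgt
      have := sum_take_mono l i
      omega) k 0 (by unfold hgt; simp) hk
  refine ⟨j, hjk, ?_⟩
  unfold hgt at hj
  omega

mutual
theorem exists_tree : ∀ (l : List ℕ), IsLuka l → ∃ T : PlaneTree, childCounts T = l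
  | [], hl => by
    exfalso
    have := hl.1
    simp at this
  | (k :: rest), hl => by
    have hsum : rest.sum + k = rest.length := by
      have := hl.1
      simp only [List.sum_cons, List.length_cons] at this
      omega
    have hpref : ∀ j < rest.length, j < (rest.take j).sum + k := by
      intro j hj
      have := hl.2 (j+1) (by simp; omega)
      rw [List.take_succ_cons] at this
      simp only [List.sum_cons] at this
      omega
    obtain ⟨ts, hts, hccl⟩ := exists_forest k rest ⟨hsum, hpref⟩
    exact ⟨PlaneTree.node ts, by rw [childCounts, hts, hccl]⟩
termination_by l hl => 2 * l.length
theorem exists_forest : ∀ (m : ℕ) (l : List ℕ), ForestCond m l →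
    ∃ ts : List PlaneTree, ts.length = m ∧ childCountsList ts = l
  | 0, l, h => by
    have hl : l = [] := by
      cases l with
      | nil => rfl
      | cons a l' =>
        exfalso
        have := h.2 0 (by simp)
        simp at this
    exact ⟨[], rfl, by rw [hl, childCountsList]⟩
  | (m+1), l, h => by
    obtain ⟨jw, hjwlen, hjw⟩ := hgt_hits l l.length (by
      unfold hgt
      rw [List.take_length]
      have := h.1
      omega)
    have hex' : ∃ j, (l.take j).sum + 1 = j := ⟨jw, hjw⟩
    classical
    have hj₀ : (l.take (Nat.find hex')).sum + 1 = Nat.find hex' := Nat.find_spec hex'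
    set j₀ := Nat.find hex' with hj₀def
    have hj₀le : j₀ ≤ l.length := le_trans (Nat.find_min' hex' hjw) hjwlen
    have hj₀pos : 1 ≤ j₀ := by
      rcases Nat.eq_zero_or_pos j₀ with h0 | h0
      · exfalso; rw [h0] at hj₀; simp at hj₀
      · exact h0
    have hmin : ∀ i < j₀, (l.take i).sum + 1 ≠ i := fun i hi => Nat.find_min hex' hi
    have hluka : IsLuka (l.take j₀) := by
      constructor
      · rw [List.length_take]
        omega
      · intro k hk
        rw [List.length_take] at hk
        rw [List.take_take]
        have hkj : min k j₀ = k := by omega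
        rw [hkj]
        by_contra hcon
        push_neg at hcon
        obtain ⟨j, hjk, hj⟩ := hgt_hits l k (by unfold hgt; omega)
        exact hmin j (by omega) hj
    have hrest : ForestCond m (l.drop j₀) := by
      constructor
      · have h1 : (l.take j₀).sum + (l.drop j₀).sum = l.sum := by
          conv_rhs => rw [← List.take_append_drop j₀ l]
          rw [List.sum_append]
        have h2 : (l.drop j₀).length = l.length - j₀ := by simp
        have := h.1
        omega
      · intro k hk
        rw [List.length_drop] at hk
        have h1 := h.2 (j₀ + k) (by omega)
        rw [List.take_add, List.sum_append] at h1
        omega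
    obtain ⟨t, ht⟩ := exists_tree (l.take j₀) hluka
    obtain ⟨ts, hts, hccl⟩ := exists_forest m (l.drop j₀) hrest
    refine ⟨t :: ts, by simp [hts], ?_⟩
    rw [childCountsList, ht, hccl, List.take_append_drop]
termination_by m l h => 2 * l.length + 1
end

/-- Height function for the cycle lemma. -/
def zh (w : List ℕ) (j : ℕ) : ℤ := ((w.take j).sum : ℤ) - j

theorem isLuka_rotate_iff (w : List ℕ) (n : ℕ) (hlen : w.length = n + 1)
    (hsum : w.sum = n) (c : ℕ) (hc : c ≤ n) :
    IsLuka (w.rotate c) ↔ (∀ j ≤ n, zh w c ≤ zh w j) ∧ ∀ j < c, zh w c < zh w j := by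
  have hrot : w.rotate c = w.drop c ++ w.take c :=
    List.rotate_eq_drop_append_take (by omega)
  have hsplit : (w.take c).sum + (w.drop c).sum = n := by
    conv_rhs => rw [← hsum, ← List.take_append_drop c w]
    rw [List.sum_append]
  have hlenA : (w.drop c).length = n + 1 - c := by simp [hlen]
  have hlenB : (w.take c).length = c := by simp [hlen]; omega
  have htaketot : ∀ j, n + 1 ≤ j → (w.take j).sum = n := by
    intro j hj
    rw [List.take_of_length_le (by omega)]
    exact hsum
  have hT1 : ∀ k, k ≤ n + 1 - c →
      ((w.drop c ++ w.take c).take k).sum + (w.take c).sum = (w.take (c + k)).sum := by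
    intro k hk
    rw [List.take_append]
    have h0 : k - (w.drop c).length = 0 := by omega
    rw [h0, List.take_add, List.sum_append, List.sum_append]
    simp only [List.take_zero, List.sum_nil]
    omega
  have hT2 : ∀ k, n + 1 - c ≤ k → k ≤ n →
      ((w.drop c ++ w.take c).take k).sum
        = (w.drop c).sum + (w.take (k - (n + 1 - c))).sum := by
    intro k h1 h2
    rw [List.take_append, List.sum_append]
    have hd : (w.drop c).take k = w.drop c := List.take_of_length_le (by omega)
    rw [hd, hlenA, List.take_take]
    have hmin : min (k - (n + 1 - c)) c = k - (n + 1 - c) := by omega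
    rw [hmin]
  have hlenrot : (w.rotate c).length = n + 1 := by
    rw [List.length_rotate, hlen]
  have hsumrot : (w.rotate c).sum = n := by
    rw [hrot, List.sum_append]
    omega
  constructor
  · intro hL
    have hL2 := hL.2
    rw [hlenrot] at hL2
    rw [hrot] at hL2
    have P1 : ∀ j, c ≤ j → j ≤ n → zh w c ≤ zh w j := by
      intro j h1 h2
      have hk := hL2 (j - c) (by omega)
      have he := hT1 (j - c) (by omega)
      have hcj : c + (j - c) = j := by omega
      rw [hcj] at he
      unfold zh
      omega
    have P2 : 1 ≤ c → zh w c ≤ -1 := by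
      intro h1
      have hk := hL2 (n + 1 - c) (by omega)
      have he := hT1 (n + 1 - c) (by omega)
      have hcj : c + (n + 1 - c) = n + 1 := by omega
      rw [hcj, htaketot (n+1) (le_refl _)] at he
      unfold zh
      omega
    have P3 : ∀ i, 1 ≤ i → i < c → zh w c < zh w i := by
      intro i h1 h2
      have hk := hL2 (i + (n + 1 - c)) (by omega)
      have he := hT2 (i + (n + 1 - c)) (by omega) (by omega)
      have hcj : i + (n + 1 - c) - (n + 1 - c) = i := by omega
      rw [hcj] at he
      unfold zh
      omega
    have hz0 : zh w 0 = 0 := by unfold zh; simp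
    constructor
    · intro j hj
      rcases Nat.lt_or_ge j c with h | h
      · rcases Nat.eq_zero_or_pos j with h0 | h0
        · rw [h0, hz0]
          have := P2 (by omega)
          omega
        · exact le_of_lt (P3 j h0 h)
      · exact P1 j h hj
    · intro j hj
      rcases Nat.eq_zero_or_pos j with h0 | h0
      · rw [h0, hz0]
        have := P2 (by omega)
        omega
      · exact P3 j h0 hj
  · intro hQ
    refine ⟨by omega, ?_⟩
    rw [hlenrot, hrot]
    intro k hk
    rcases le_or_gt k (n + 1 - c) with h | h
    · have he := hT1 k h
      rcases Nat.lt_or_ge (c + k) (n + 1) with h2 | h2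
      · have := hQ.1 (c + k) (by omega)
        unfold zh at this
        omega
      · have hck : c + k = n + 1 := by omega
        rw [hck, htaketot (n+1) (le_refl _)] at he
        have hc1 : 1 ≤ c := by omega
        have := hQ.2 0 (by omega)
        unfold zh at this
        simp only [List.take_zero, List.sum_nil, Nat.cast_zero, Nat.cast_ofNat,
          CharP.cast_eq_zero] at this
        omega
    · have he := hT2 k (by omega) (by omega)
      have := hQ.2 (k - (n + 1 - c)) (by omega)
      unfold zh at this
      omega

theorem cycle_unique (w : List ℕ) (n : ℕ) (hlen : w.length = n + 1) (hsum : w.sum = n) :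
    ∃! c : Fin (n + 1), IsLuka (w.rotate c.val) := by
  classical
  obtain ⟨c₀, hc₀mem, hmin⟩ := Finset.exists_min_image (Finset.range (n+1)) (zh w)
    ⟨0, by simp⟩
  have hc₀n : c₀ ≤ n := by
    have := Finset.mem_range.1 hc₀mem
    omega
  have hminall : ∀ i ≤ n, zh w c₀ ≤ zh w i := fun i hi =>
    hmin i (Finset.mem_range.2 (by omega))
  have hex2 : ∃ j, zh w j ≤ zh w c₀ := ⟨c₀, le_refl _⟩
  have hj₁spec : zh w (Nat.find hex2) ≤ zh w c₀ := Nat.find_spec hex2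
  set j₁ := Nat.find hex2 with hj₁def
  have hj₁le : j₁ ≤ c₀ := Nat.find_min' hex2 (le_refl _)
  have hQ1 : ∀ j ≤ n, zh w j₁ ≤ zh w j := fun j hj => le_trans hj₁spec (hminall j hj)
  have hQ2 : ∀ j < j₁, zh w j₁ < zh w j := by
    intro j hj
    have h1 : ¬ zh w j ≤ zh w c₀ := Nat.find_min hex2 hj
    push_neg at h1
    exact lt_of_le_of_lt hj₁spec h1
  refine ⟨⟨j₁, by omega⟩, ?_, ?_⟩
  · show IsLuka (w.rotate j₁)
    rw [isLuka_rotate_iff w n hlen hsum j₁ (by omega)]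
    exact ⟨hQ1, hQ2⟩
  · intro y hy
    have hyn : (y : ℕ) ≤ n := by omega
    rw [isLuka_rotate_iff w n hlen hsum y.val hyn] at hy
    apply Fin.ext
    show y.val = j₁
    rcases lt_trichotomy y.val j₁ with h | h | h
    · have h1 := hQ2 y.val h
      have h2 := hy.1 j₁ (by omega)
      omega
    · exact h
    · have h1 := hy.2 j₁ h
      have h2 := hQ1 y.val hyn
      omega

theorem ofFn_rotate {n : ℕ} (g : Fin (n+1) → ℕ) (c : Fin (n+1)) :
    (List.ofFn g).rotate c.val = List.ofFn (fun i => g (i + c)) := by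
  apply List.ext_getElem
  · simp
  · intro i h1 h2
    rw [List.getElem_rotate, List.getElem_ofFn, List.getElem_ofFn]
    congr 1
    simp only [List.length_ofFn]
    apply Fin.ext
    simp [Fin.add_def]

theorem card_luka_perms (n : ℕ) (m : Fin (n+1) → ℕ) (hm : ∑ i, m i = n) :
    (Finset.univ.filter (fun σ : Equiv.Perm (Fin (n+1)) =>
      IsLuka (List.ofFn (fun i => m (σ i))))).card = n.factorial := by
  classical
  set P : Equiv.Perm (Fin (n+1)) → Prop :=
    fun σ => IsLuka (List.ofFn (fun i => m (σ i))) with hP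
  have key : ∀ τ : Equiv.Perm (Fin (n+1)), ∃! c : Fin (n+1),
      P (τ * Equiv.addRight c) := by
    intro τ
    have hlen : (List.ofFn (fun i => m (τ i))).length = n + 1 := by simp
    have hsum : (List.ofFn (fun i => m (τ i))).sum = n := by
      rw [List.sum_ofFn]
      exact (Fintype.sum_equiv τ _ _ (fun i => rfl)).trans hm
    obtain ⟨c, hc, huniq⟩ := cycle_unique (List.ofFn (fun i => m (τ i))) n hlen hsum
    have hword : ∀ c : Fin (n+1), (List.ofFn (fun i => m (τ i))).rotate c.val
        = List.ofFn (fun i => m ((τ * Equiv.addRight c) i)) := by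
      intro c
      rw [ofFn_rotate (fun i => m (τ i)) c]
      rfl
    refine ⟨c, ?_, ?_⟩
    · rw [hP]
      simp only []
      rw [← hword]
      exact hc
    · intro y hy
      apply huniq
      rw [hword]
      exact hy
  set f : Equiv.Perm (Fin (n+1)) → Equiv.Perm (Fin (n+1)) :=
    fun τ => τ * Equiv.addRight (Classical.choose (key τ)) with hf
  have hmaps : ∀ τ ∈ (Finset.univ : Finset (Equiv.Perm (Fin (n+1)))),
      f τ ∈ Finset.univ.filter P := by
    intro τ _
    rw [Finset.mem_filter]
    exact ⟨Finset.mem_univ _, (Classical.choose_spec (key τ)).1⟩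
  have hcard := Finset.card_eq_sum_card_fiberwise hmaps
  have hfiber : ∀ σ ∈ Finset.univ.filter P,
      (Finset.univ.filter (fun τ => f τ = σ)).card = n + 1 := by
    intro σ hσ
    have hσP : P σ := (Finset.mem_filter.1 hσ).2
    have himage : Finset.univ.filter (fun τ => f τ = σ)
        = Finset.image (fun c : Fin (n+1) => σ * (Equiv.addRight c)⁻¹) Finset.univ := by
      ext τ
      simp only [Finset.mem_filter, Finset.mem_univ, true_and, Finset.mem_image]
      constructor
      · intro hτ
        exact ⟨Classical.choose (key τ), by rw [← hτ, hf]; group⟩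
      · rintro ⟨c, rfl⟩
        have h1 : (σ * (Equiv.addRight c)⁻¹) * Equiv.addRight c = σ := by group
        have h2 : P ((σ * (Equiv.addRight c)⁻¹) * Equiv.addRight c) := by rw [h1]; exact hσP
        have h3 := (Classical.choose_spec (key (σ * (Equiv.addRight c)⁻¹))).2 c h2
        rw [hf]
        simp only []
        rw [← h3, h1]
    have hinj : Function.Injective (fun c : Fin (n+1) => σ * (Equiv.addRight c)⁻¹) := by
      intro c c' hcc
      have h1 : (Equiv.addRight c)⁻¹ = (Equiv.addRight c')⁻¹ := mul_left_cancel hcc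
      have h2 : Equiv.addRight c = Equiv.addRight c' := inv_injective h1
      have h3 := congrArg (fun (e : Equiv.Perm (Fin (n+1))) => e 0) h2
      simpa using h3
    rw [himage, Finset.card_image_of_injective _ hinj, Finset.card_univ, Fintype.card_fin]
  rw [Finset.sum_congr rfl hfiber] at hcard
  rw [Finset.sum_const, smul_eq_mul, Finset.card_univ, Fintype.card_perm,
    Fintype.card_fin] at hcard
  have hfac : (n+1).factorial = (n+1) * n.factorial := Nat.factorial_succ n
  have h2 : (n+1) * (Finset.univ.filter P).card = (n+1) * n.factorial := by
    rw [← hfac, hcard]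
    ring
  exact Nat.eq_of_mul_eq_mul_left (by omega) h2

end PlaneTree

open Finset

lemma finAntidiagonal_zero' (d : ℕ) : Finset.finAntidiagonal d (0:ℕ) = {0} := by
  ext m
  simp [Finset.mem_finAntidiagonal, Finset.sum_eq_zero_iff, funext_iff]

lemma step_term {d : ℕ} (u : Fin d → ℕ → ℝ) (m : Fin d → ℕ) (i : Fin d) :
    (∏ j ∈ Finset.univ.erase i, u j (m j)) * u i (m i + 1) / (∏ j, ((m j).factorial : ℝ))
    = ((m i : ℝ) + 1) *
      ((∏ j, u j (Function.update m i (m i + 1) j)) /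
        ∏ j, ((Function.update m i (m i + 1) j).factorial : ℝ)) := by
  have h1 : (∏ j, u j (Function.update m i (m i + 1) j))
      = (∏ j ∈ Finset.univ.erase i, u j (m j)) * u i (m i + 1) := by
    rw [← Finset.prod_erase_mul Finset.univ _ (Finset.mem_univ i), Function.update_self]
    congr 1
    exact Finset.prod_congr rfl (fun j hj => by
      rw [Function.update_of_ne (Finset.ne_of_mem_erase hj)])
  have h2 : (∏ j, ((Function.update m i (m i + 1) j).factorial : ℝ))
      = (∏ j ∈ Finset.univ.erase i, ((m j).factorial : ℝ)) * ((m i + 1).factorial : ℝ) := by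
    rw [← Finset.prod_erase_mul Finset.univ _ (Finset.mem_univ i), Function.update_self]
    congr 1
    exact Finset.prod_congr rfl (fun j hj => by
      rw [Function.update_of_ne (Finset.ne_of_mem_erase hj)])
  have h3 : (∏ j, ((m j).factorial : ℝ))
      = (∏ j ∈ Finset.univ.erase i, ((m j).factorial : ℝ)) * ((m i).factorial : ℝ) :=
    (Finset.prod_erase_mul Finset.univ _ (Finset.mem_univ i)).symm
  rw [h1, h2, h3]
  have e1 : ((m i).factorial : ℝ) ≠ 0 := Nat.cast_ne_zero.2 (Nat.factorial_ne_zero _)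
  have e2 : (∏ j ∈ Finset.univ.erase i, ((m j).factorial : ℝ)) ≠ 0 :=
    Finset.prod_ne_zero_iff.2 (fun j _ => Nat.cast_ne_zero.2 (Nat.factorial_ne_zero _))
  have e3 : ((m i + 1).factorial : ℝ) = ((m i : ℝ) + 1) * ((m i).factorial : ℝ) := by
    rw [Nat.factorial_succ]; push_cast; ring
  rw [e3]
  field_simp

lemma reindex_sum {d : ℕ} (N : ℕ) (H : (Fin d → ℕ) → ℝ) :
    ∑ m ∈ Finset.finAntidiagonal d N, ∑ i, ((m i : ℝ) + 1) * H (Function.update m i (m i + 1))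
    = ∑ m ∈ Finset.finAntidiagonal d (N+1), ∑ i, (m i : ℝ) * H m := by
  rw [← Finset.sum_product', ← Finset.sum_product']
  have h2 : ∑ q ∈ (Finset.finAntidiagonal d (N+1) ×ˢ Finset.univ).filter
        (fun q : (Fin d → ℕ) × Fin d => q.1 q.2 ≠ 0), ((q.1 q.2 : ℝ) * H q.1)
      = ∑ q ∈ Finset.finAntidiagonal d (N+1) ×ˢ Finset.univ, ((q.1 q.2 : ℝ) * H q.1) :=
    Finset.sum_filter_of_ne (fun q _ hne => by
      intro h0; rw [h0] at hne; simp at hne)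
  rw [← h2]
  refine Finset.sum_nbij' (i := fun p : (Fin d → ℕ) × Fin d =>
      (Function.update p.1 p.2 (p.1 p.2 + 1), p.2))
    (j := fun q : (Fin d → ℕ) × Fin d =>
      (Function.update q.1 q.2 (q.1 q.2 - 1), q.2)) ?_ ?_ ?_ ?_ ?_
  · intro p hp
    simp only [Finset.mem_product, Finset.mem_finAntidiagonal] at hp
    simp only [Finset.mem_filter, Finset.mem_product, Finset.mem_finAntidiagonal]
    refine ⟨⟨?_, Finset.mem_univ _⟩, by simp [Function.update_self]⟩
    have hp1 := hp.1
    rw [Finset.sum_eq_sum_sdiff_singleton_add (Finset.mem_univ p.2) p.1] at hp1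
    rw [Finset.sum_update_of_mem (Finset.mem_univ _)]
    omega
  · intro q hq
    simp only [Finset.mem_filter, Finset.mem_product, Finset.mem_finAntidiagonal] at hq
    simp only [Finset.mem_product, Finset.mem_finAntidiagonal]
    refine ⟨?_, Finset.mem_univ _⟩
    have h1 : 1 ≤ q.1 q.2 := Nat.one_le_iff_ne_zero.2 hq.2
    have hq1 := hq.1.1
    rw [Finset.sum_eq_sum_sdiff_singleton_add (Finset.mem_univ q.2) q.1] at hq1
    rw [Finset.sum_update_of_mem (Finset.mem_univ _)]
    omega
  · intro p hp
    refine Prod.ext (funext fun z => ?_) rfl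
    by_cases hz : z = p.2
    · subst hz; simp [Function.update_self]
    · simp [Function.update_of_ne hz]
  · intro q hq
    simp only [Finset.mem_filter] at hq
    have h1 : 1 ≤ q.1 q.2 := Nat.one_le_iff_ne_zero.2 hq.2
    refine Prod.ext (funext fun z => ?_) rfl
    by_cases hz : z = q.2
    · subst hz; simp only [Function.update_self]; omega
    · simp [Function.update_of_ne hz]
  · intro p hp
    simp only [Function.update_self]
    push_cast
    ring_nf

lemma leibniz_multinomial (d : ℕ) :
    ∀ (N : ℕ) (f : Fin d → ℝ → ℝ), (∀ i, ContDiff ℝ N (f i)) → ∀ (x : ℝ),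
    iteratedDeriv N (fun t => ∏ i, f i t) x =
      (N.factorial : ℝ) * ∑ m ∈ Finset.finAntidiagonal d N,
        ∏ i, iteratedDeriv (m i) (f i) x / (m i).factorial := by
  intro N
  induction N with
  | zero =>
    intro f hf x
    simp [finAntidiagonal_zero']
  | succ N ih =>
    intro f hf x
    have hN : ∀ i, ContDiff ℝ N (f i) :=
      fun i => (hf i).of_le (by exact_mod_cast Nat.le_succ N)
    rw [iteratedDeriv_succ, funext (ih f hN)]
    have hmem : ∀ m ∈ Finset.finAntidiagonal d N, ∀ i, m i ≤ N := by
      intro m hm i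
      rw [Finset.mem_finAntidiagonal] at hm
      rw [← hm]
      exact Finset.single_le_sum (fun j _ => Nat.zero_le _) (Finset.mem_univ i)
    have hD : ∀ (k : ℕ), k ≤ N → ∀ i,
        HasDerivAt (iteratedDeriv k (f i)) (iteratedDeriv (k+1) (f i) x) x := by
      intro k hk i
      have h1 : Differentiable ℝ (iteratedDeriv k (f i)) :=
        (hf i).differentiable_iteratedDeriv k (by exact_mod_cast Nat.lt_succ_of_le hk)
      have h2 := (h1 x).hasDerivAt
      rwa [← iteratedDeriv_succ] at h2
    simp only [Finset.prod_div_distrib]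
    have hAt : HasDerivAt
        (fun y => (N.factorial : ℝ) * ∑ m ∈ Finset.finAntidiagonal d N,
          (∏ i, iteratedDeriv (m i) (f i) y) / ∏ i, ((m i).factorial : ℝ))
        ((N.factorial : ℝ) * ∑ m ∈ Finset.finAntidiagonal d N,
          (∑ i, (∏ j ∈ Finset.univ.erase i, iteratedDeriv (m j) (f j) x) *
            iteratedDeriv (m i + 1) (f i) x) / ∏ i, ((m i).factorial : ℝ)) x := by
      apply HasDerivAt.const_mul
      apply HasDerivAt.fun_sum
      intro m hm
      apply HasDerivAt.div_const
      have := HasDerivAt.fun_finsetProd (u := Finset.univ)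
        (f := fun i y => iteratedDeriv (m i) (f i) y)
        (f' := fun i => iteratedDeriv (m i + 1) (f i) x) (x := x)
        (fun i _ => hD (m i) (hmem m hm i) i)
      simpa [smul_eq_mul] using this
    rw [hAt.deriv]
    simp only [Finset.sum_div]
    have hkey : ∀ m ∈ Finset.finAntidiagonal d N, ∀ i : Fin d,
        (∏ j ∈ Finset.univ.erase i, iteratedDeriv (m j) (f j) x) *
          iteratedDeriv (m i + 1) (f i) x / ∏ j, ((m j).factorial : ℝ)
        = ((m i : ℝ) + 1) * ((∏ j, iteratedDeriv (Function.update m i (m i + 1) j) (f j) x) /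
            ∏ j, ((Function.update m i (m i + 1) j).factorial : ℝ)) := by
      intro m _ i
      exact step_term (fun j k => iteratedDeriv k (f j) x) m i
    rw [Finset.sum_congr rfl (fun m hm => Finset.sum_congr rfl (fun i _ => hkey m hm i))]
    have hupdate : ∀ (m : Fin d → ℕ) (i : Fin d),
        Function.update m i (m i + 1) = fun j => Function.update m i (m i + 1) j := by
      intro m i; rfl
    rw [reindex_sum N (fun m => (∏ j, iteratedDeriv (m j) (f j) x) /
      ∏ j, ((m j).factorial : ℝ))]
    have hfin : ∀ m ∈ Finset.finAntidiagonal d (N+1),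
        ∑ i, (m i : ℝ) * ((∏ j, iteratedDeriv (m j) (f j) x) / ∏ j, ((m j).factorial : ℝ))
        = ((N : ℝ) + 1) * ((∏ j, iteratedDeriv (m j) (f j) x) / ∏ j, ((m j).factorial : ℝ)) := by
      intro m hm
      rw [Finset.mem_finAntidiagonal] at hm
      rw [← Finset.sum_mul]
      have : ∑ i, (m i : ℝ) = ((N : ℝ) + 1) := by
        rw [← Nat.cast_sum, hm]; push_cast; ring
      rw [this]
    rw [Finset.sum_congr rfl hfin, ← Finset.mul_sum, Nat.factorial_succ]
    push_cast
    ring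

namespace PlaneTree

theorem ofFn_getD {n : ℕ} (l : List ℕ) (h : l.length = n + 1) :
    List.ofFn (fun i : Fin (n+1) => l.getD i 0) = l := by
  apply List.ext_getElem (by simp [h])
  intro i h1 h2
  rw [List.getElem_ofFn]
  exact List.getD_eq_getElem l 0 (by omega)

theorem getD_ofFn {n : ℕ} (g : Fin (n+1) → ℕ) (i : Fin (n+1)) :
    (List.ofFn g).getD i 0 = g i := by
  rw [List.getD_eq_getElem _ 0 (by simp [i.isLt]), List.getElem_ofFn]

/-- The finset of Łukasiewicz words of length `n+1`, as functions. -/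
def lukaWords (n : ℕ) : Finset (Fin (n+1) → ℕ) :=
  (Finset.finAntidiagonal (n+1) n).filter (fun m => IsLuka (List.ofFn m))

/-- The word of child counts of a tree, as a function. -/
def toWord (n : ℕ) (T : PlaneTree) : Fin (n+1) → ℕ := fun i => (T.childCounts).getD i 0

theorem toWord_mem (n : ℕ) (T : PlaneTree) (hT : T.size = n + 1) :
    toWord n T ∈ lukaWords n := by
  have hlen : T.childCounts.length = n + 1 := hT
  have hofn : List.ofFn (toWord n T) = T.childCounts := ofFn_getD _ hlen
  simp only [lukaWords, Finset.mem_filter, Finset.mem_finAntidiagonal]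
  constructor
  · have h1 := List.sum_ofFn (f := toWord n T)
    rw [hofn] at h1
    have h2 := sum_cc T
    omega
  · rw [hofn]
    exact isLuka_cc T

theorem toWord_bij (n : ℕ) :
    Function.Bijective (fun T : {T : PlaneTree // T.size = n + 1} =>
      (⟨toWord n T.1, toWord_mem n T.1 T.2⟩ : {m // m ∈ lukaWords n})) := by
  constructor
  · intro T T' h
    have h1 : toWord n T.1 = toWord n T'.1 := congrArg Subtype.val h
    have h2 : List.ofFn (toWord n T.1) = List.ofFn (toWord n T'.1) := by rw [h1]
    have e1 : List.ofFn (toWord n T.1) = T.1.childCounts := ofFn_getD _ T.2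
    have e2 : List.ofFn (toWord n T'.1) = T'.1.childCounts := ofFn_getD _ T'.2
    rw [e1, e2] at h2
    exact Subtype.ext (cc_inj _ _ h2)
  · intro m
    have hm := m.2
    simp only [lukaWords, Finset.mem_filter] at hm
    obtain ⟨T, hT⟩ := exists_tree (List.ofFn m.1) hm.2
    have hsize : T.size = n + 1 := by
      show T.childCounts.length = n + 1
      rw [hT, List.length_ofFn]
    refine ⟨⟨T, hsize⟩, ?_⟩
    apply Subtype.ext
    show toWord n T = m.1
    funext i
    show T.childCounts.getD i 0 = m.1 i
    rw [hT]
    exact getD_ofFn m.1 i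

noncomputable instance (n : ℕ) : Fintype {T : PlaneTree // T.size = n + 1} := by
  classical
  exact Fintype.ofInjective _ (toWord_bij n).1

end PlaneTree

/-- The weight of a word. -/
noncomputable def Fw (n : ℕ) (f : Fin (n+1) → ℝ → ℝ) (x : ℝ) (m : Fin (n+1) → ℕ) : ℝ :=
  ∏ j, iteratedDeriv (m j) (f j) x / ((m j).factorial : ℝ)

/-- The weight of a word summed over all labellings. -/
noncomputable def Gw (n : ℕ) (f : Fin (n+1) → ℝ → ℝ) (x : ℝ) (m : Fin (n+1) → ℕ) : ℝ :=
  ∑ σ : Equiv.Perm (Fin (n+1)),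
    ∏ i, iteratedDeriv (m i) (f (σ i)) x / ((m i).factorial : ℝ)

theorem leibniz_via_plane_trees (n : ℕ) (f : Fin (n + 1) → ℝ → ℝ)
    (hf : ∀ i, ContDiff ℝ n (f i)) (x : ℝ) :
    iteratedDeriv n (fun t => ∏ i, f i t) x =
      ∑ᶠ T : {T : PlaneTree // T.size = n + 1},
        ∑ σ : Equiv.Perm (Fin (n + 1)),
          ∏ i : Fin (n + 1),
            iteratedDeriv (T.1.childCounts.getD (i : ℕ) 0) (f (σ i)) x /
              (T.1.childCounts.getD (i : ℕ) 0).factorial := by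
  classical
  rw [leibniz_multinomial (n+1) n f hf x]
  have h1 : ∑ᶠ T : {T : PlaneTree // T.size = n + 1},
      ∑ σ : Equiv.Perm (Fin (n + 1)),
        ∏ i : Fin (n + 1),
          iteratedDeriv (T.1.childCounts.getD (i : ℕ) 0) (f (σ i)) x /
            (T.1.childCounts.getD (i : ℕ) 0).factorial
      = ∑ m ∈ PlaneTree.lukaWords n, Gw n f x m := by
    rw [finsum_eq_sum_of_fintype, ← Finset.sum_coe_sort (PlaneTree.lukaWords n) (Gw n f x)]
    exact Fintype.sum_bijective _ (PlaneTree.toWord_bij n) _ _ (fun T => rfl)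
  rw [h1]
  have h2 : ∀ m : Fin (n+1) → ℕ, ∀ σ : Equiv.Perm (Fin (n+1)),
      (∏ i, iteratedDeriv (m i) (f (σ i)) x / ((m i).factorial : ℝ))
      = Fw n f x (fun j => m (σ⁻¹ j)) := by
    intro m σ
    simp only [Fw]
    have := Equiv.prod_comp σ
      (fun j => iteratedDeriv (m (σ⁻¹ j)) (f j) x / ((m (σ⁻¹ j)).factorial : ℝ))
    simpa only [Equiv.Perm.inv_def, Equiv.symm_apply_apply] using this
  have h3 : ∑ m ∈ PlaneTree.lukaWords n, Gw n f x m
      = ∑ σ : Equiv.Perm (Fin (n+1)), ∑ m ∈ PlaneTree.lukaWords n,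
          Fw n f x (fun j => m (σ⁻¹ j)) := by
    rw [← Finset.sum_comm]
    apply Finset.sum_congr rfl
    intro m _
    simp only [Gw]
    exact Finset.sum_congr rfl (fun σ _ => h2 m σ)
  rw [h3]
  have h4 : ∀ σ : Equiv.Perm (Fin (n+1)),
      ∑ m ∈ PlaneTree.lukaWords n, Fw n f x (fun j => m (σ⁻¹ j))
      = ∑ m ∈ Finset.finAntidiagonal (n+1) n,
          if PlaneTree.IsLuka (List.ofFn (fun i => m (σ i))) then Fw n f x m else 0 := by
    intro σ
    rw [PlaneTree.lukaWords, Finset.sum_filter]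
    refine Finset.sum_nbij' (i := fun m => fun j => m (σ⁻¹ j))
      (j := fun m => fun j => m (σ j)) ?_ ?_ ?_ ?_ ?_
    · intro m hm
      rw [Finset.mem_finAntidiagonal] at hm ⊢
      exact (Equiv.sum_comp σ⁻¹ m).trans hm
    · intro m hm
      rw [Finset.mem_finAntidiagonal] at hm ⊢
      exact (Equiv.sum_comp σ m).trans hm
    · intro m _
      funext j
      simp
    · intro m _
      funext j
      simp
    · intro m _
      have hcond : (fun i => (fun j => m (σ⁻¹ j)) (σ i)) = m := by
        funext i
        simp
      rw [hcond]
  rw [Finset.sum_congr rfl (fun σ _ => h4 σ), ← Finset.sum_comm]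
  have h5 : ∀ m ∈ Finset.finAntidiagonal (n+1) n,
      (∑ σ : Equiv.Perm (Fin (n+1)),
        if PlaneTree.IsLuka (List.ofFn (fun i => m (σ i))) then Fw n f x m else 0)
      = (n.factorial : ℝ) * Fw n f x m := by
    intro m hm
    rw [Finset.mem_finAntidiagonal] at hm
    rw [← Finset.sum_filter, Finset.sum_const, PlaneTree.card_luka_perms n m hm,
      nsmul_eq_mul]
  rw [Finset.sum_congr rfl h5, ← Finset.mul_sum]
  simp only [Fw]
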